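/- arXiv:2305.12030 — 2 statements merged into one kernel-verified Lean document; each statement's English description precedes it below -/
import Mathlib

section
/- Let E and F be real Hilbert spaces and let f : E × F → ℝ be block-smooth with constants (M, L), with M, L ≥ 0. Fix u* ∈ E, w* ∈ F. Let (Ω, μ) be a probability space and (U, W) : Ω → E × F measurable, with all the quantities below integrable. Suppose ‖∫∇_w f(U,W) dμ‖ ≤ m_w, ∫‖∇_w f(U,W) − ∫∇_w f(U,W)dμ‖² dμ ≤ v_w, ‖∫∇_u f(U,w*) dμ‖ ≤ m_u, ∫‖∇_u f(U,w*) − ∫∇_u f(U,w*)dμ‖² dμ ≤ v_u, ∫‖W − w*‖² dμ ≤ δ_w², and ∫‖U − u*‖² dμ ≤ δ_u². Then f(u*,w*) − ∫ f(U,W) dμ ≤ ((L+1)/2)·δ_w² + (1/2)·m_w² + (1/2)·v_w + ((M+1)/2)·δ_u² + (1/2)·m_u² + (1/2)·v_u. -/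
open MeasureTheory

open scoped RealInnerProductSpace in
/-- Descent lemma: quadratic upper bound for a function with Lipschitz gradient. -/
lemma descent_lemma {H : Type*} [NormedAddCommGroup H] [InnerProductSpace ℝ H]
    [CompleteSpace H] (g : H → ℝ) (C : ℝ) (hd : Differentiable ℝ g)
    (hlip : ∀ a b : H, ‖gradient g a - gradient g b‖ ≤ C * ‖a - b‖) (x y : H) :
    g y ≤ g x + ⟪gradient g x, y - x⟫ + C / 2 * ‖y - x‖ ^ 2 := by
  by_cases hyx : y = x
  · subst hyx; simp
  set v := y - x with hv
  have hv0 : v ≠ 0 := sub_ne_zero.mpr hyx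
  have hvpos : (0:ℝ) < ‖v‖ := norm_pos_iff.mpr hv0
  have hC0 : 0 ≤ C := by
    have h2 := hlip x (x + v)
    have h3 : ‖x - (x + v)‖ = ‖v‖ := by
      rw [show x - (x + v) = -v by abel, norm_neg]
    rw [h3] at h2
    nlinarith [norm_nonneg (gradient g x - gradient g (x + v))]
  have hc : ∀ t : ℝ, HasDerivAt (fun t : ℝ => g (x + t • v))
      ⟪gradient g (x + t • v), v⟫ t := by
    intro t
    have h1 : HasDerivAt (fun t : ℝ => x + t • v) v t := by
      simpa using ((hasDerivAt_id t).smul_const v).const_add x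
    have h2 := ((hd (x + t • v)).hasGradientAt.hasFDerivAt).comp_hasDerivAt t h1
    simpa [InnerProductSpace.toDual_apply_apply, Function.comp_def] using h2
  have hcont : Continuous fun t : ℝ => (⟪gradient g (x + t • v), v⟫ : ℝ) := by
    apply LipschitzWith.continuous (K := Real.toNNReal (C * ‖v‖ * ‖v‖))
    apply LipschitzWith.of_dist_le_mul
    intro s t
    have h1 : (⟪gradient g (x + s • v), v⟫ : ℝ) - ⟪gradient g (x + t • v), v⟫
        = ⟪gradient g (x + s • v) - gradient g (x + t • v), v⟫ := by
      rw [inner_sub_left]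
    have h2 := abs_real_inner_le_norm (gradient g (x + s • v) - gradient g (x + t • v)) v
    have h3 := hlip (x + s • v) (x + t • v)
    have h4 : ‖(x + s • v) - (x + t • v)‖ = |s - t| * ‖v‖ := by
      rw [show (x + s • v) - (x + t • v) = (s - t) • v by module, norm_smul,
        Real.norm_eq_abs]
    rw [h4] at h3
    have h5 : C * ‖v‖ * ‖v‖ ≤ (Real.toNNReal (C * ‖v‖ * ‖v‖) : ℝ) :=
      Real.le_coe_toNNReal _
    rw [Real.dist_eq, Real.dist_eq, h1]
    calc |(⟪gradient g (x + s • v) - gradient g (x + t • v), v⟫ : ℝ)|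
        ≤ ‖gradient g (x + s • v) - gradient g (x + t • v)‖ * ‖v‖ := h2
      _ ≤ (C * (|s - t| * ‖v‖)) * ‖v‖ :=
          mul_le_mul_of_nonneg_right h3 (norm_nonneg v)
      _ = (C * ‖v‖ * ‖v‖) * |s - t| := by ring
      _ ≤ (Real.toNNReal (C * ‖v‖ * ‖v‖) : ℝ) * |s - t| :=
          mul_le_mul_of_nonneg_right h5 (abs_nonneg _)
  have key : g y - g x = ∫ t in (0:ℝ)..1, (⟪gradient g (x + t • v), v⟫ : ℝ) := by
    have h := intervalIntegral.integral_eq_sub_of_hasDerivAt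
      (f := fun t : ℝ => g (x + t • v)) (fun t _ => hc t)
      (hcont.intervalIntegrable 0 1)
    rw [h]
    simp [hv]
  have hbound : ∀ t ∈ Set.Icc (0:ℝ) 1,
      (⟪gradient g (x + t • v), v⟫ : ℝ) ≤ ⟪gradient g x, v⟫ + C * ‖v‖ ^ 2 * t := by
    intro t ht
    have h1 : (⟪gradient g (x + t • v), v⟫ : ℝ) - ⟪gradient g x, v⟫
        = ⟪gradient g (x + t • v) - gradient g x, v⟫ := by rw [inner_sub_left]
    have h2 := real_inner_le_norm (gradient g (x + t • v) - gradient g x) v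
    have h3 := hlip (x + t • v) x
    have h4 : ‖(x + t • v) - x‖ = t * ‖v‖ := by
      rw [show (x + t • v) - x = t • v by abel, norm_smul, Real.norm_eq_abs,
        abs_of_nonneg ht.1]
    rw [h4] at h3
    nlinarith [norm_nonneg v, mul_le_mul_of_nonneg_right h3 (norm_nonneg v),
      norm_nonneg (gradient g (x + t • v) - gradient g x)]
  have hint : ∫ t in (0:ℝ)..1, (⟪gradient g (x + t • v), v⟫ : ℝ)
      ≤ ∫ t in (0:ℝ)..1, ((⟪gradient g x, v⟫ : ℝ) + C * ‖v‖ ^ 2 * t) := by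
    apply intervalIntegral.integral_mono_on (by norm_num)
      (hcont.intervalIntegrable 0 1)
      ((continuous_const.add (continuous_const.mul continuous_id)).intervalIntegrable 0 1)
    exact hbound
  have hval : ∫ t in (0:ℝ)..1, ((⟪gradient g x, v⟫ : ℝ) + C * ‖v‖ ^ 2 * t)
      = ⟪gradient g x, v⟫ + C / 2 * ‖v‖ ^ 2 := by
    rw [intervalIntegral.integral_add intervalIntegrable_const
      ((intervalIntegral.intervalIntegrable_id).const_mul _)]
    rw [intervalIntegral.integral_const_mul, integral_id]
    simp; ring
  rw [hval] at hint
  linarith [key ▸ hint]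


open scoped RealInnerProductSpace in
lemma second_moment {H : Type*} [NormedAddCommGroup H] [InnerProductSpace ℝ H]
    [CompleteSpace H] {Ω : Type*} [MeasurableSpace Ω] (μ : Measure Ω)
    [IsProbabilityMeasure μ] (g : Ω → H) (hg : Integrable g μ)
    (hg2 : Integrable (fun ω => ‖g ω - ∫ ω', g ω' ∂μ‖ ^ 2) μ) :
    Integrable (fun ω => ‖g ω‖ ^ 2) μ ∧
    ∫ ω, ‖g ω‖ ^ 2 ∂μ
      = (∫ ω, ‖g ω - ∫ ω', g ω' ∂μ‖ ^ 2 ∂μ) + ‖∫ ω', g ω' ∂μ‖ ^ 2 := by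
  set m := ∫ ω', g ω' ∂μ with hm
  have hexp : ∀ ω, ‖g ω‖ ^ 2 = ‖g ω - m‖ ^ 2 + 2 * ⟪g ω - m, m⟫ + ‖m‖ ^ 2 := by
    intro ω
    have h := norm_add_sq_real (g ω - m) m
    simpa using h
  have hgsub : Integrable (fun ω => g ω - m) μ := hg.sub (integrable_const m)
  have hinner : Integrable (fun ω => (⟪g ω - m, m⟫ : ℝ)) μ := hgsub.inner_const m
  have hinner2 : Integrable (fun ω => 2 * (⟪g ω - m, m⟫ : ℝ)) μ := hinner.const_mul 2
  have ha : Integrable (fun ω => ‖g ω - m‖ ^ 2 + 2 * (⟪g ω - m, m⟫ : ℝ)) μ :=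
    hg2.add hinner2
  have hsum : Integrable
      (fun ω => ‖g ω - m‖ ^ 2 + 2 * ⟪g ω - m, m⟫ + ‖m‖ ^ 2) μ :=
    ha.add (integrable_const _)
  have hintg : Integrable (fun ω => ‖g ω‖ ^ 2) μ :=
    hsum.congr (ae_of_all _ fun ω => (hexp ω).symm)
  have hzero : ∫ ω, (⟪g ω - m, m⟫ : ℝ) ∂μ = 0 := by
    have h1 : ∀ ω, (⟪g ω - m, m⟫ : ℝ) = ⟪m, g ω - m⟫ := fun ω => real_inner_comm _ _
    simp_rw [h1]
    rw [integral_inner hgsub m,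
      integral_sub hg (integrable_const m)]
    simp [hm]
  refine ⟨hintg, ?_⟩
  have h2 : ∫ ω, ‖g ω‖ ^ 2 ∂μ
      = ∫ ω, (‖g ω - m‖ ^ 2 + 2 * ⟪g ω - m, m⟫ + ‖m‖ ^ 2) ∂μ := by
    exact integral_congr_ae (ae_of_all _ hexp)
  rw [h2, integral_add ha (integrable_const _),
    integral_add hg2 hinner2, integral_const_mul, hzero, integral_const]
  simp

open scoped RealInnerProductSpace

/-- Let `f : E × F → ℝ` be block-smooth with constants `(M, L)` on real
Hilbert spaces, `u* ∈ E`, `w* ∈ F`, `(Ω, μ)` a probability space and `(U, W) : Ω → E × F`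
with the relevant quantities integrable. If `‖∫ ∇_w f(U,W) dμ‖ ≤ m_w`,
`∫ ‖∇_w f(U,W) − ∫ ∇_w f(U,W) dμ‖² dμ ≤ v_w`, `‖∫ ∇_u f(U,w*) dμ‖ ≤ m_u`,
`∫ ‖∇_u f(U,w*) − ∫ ∇_u f(U,w*) dμ‖² dμ ≤ v_u`, `∫ ‖W − w*‖² dμ ≤ δ_w²` and
`∫ ‖U − u*‖² dμ ≤ δ_u²`, then
`f(u*,w*) − ∫ f(U,W) dμ ≤ ((L+1)/2) δ_w² + m_w²/2 + v_w/2 + ((M+1)/2) δ_u² + m_u²/2 + v_u/2`. -/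
theorem expected_gap_bound_pair
    {E F : Type*}
    [NormedAddCommGroup E] [InnerProductSpace ℝ E] [CompleteSpace E]
    [NormedAddCommGroup F] [InnerProductSpace ℝ F] [CompleteSpace F]
    {Ω : Type*} [MeasurableSpace Ω] (μ : Measure Ω) [IsProbabilityMeasure μ]
    (f : E × F → ℝ) (M L : ℝ) (hM : 0 ≤ M) (hL : 0 ≤ L)
    (hdu : ∀ w : F, Differentiable ℝ (fun x : E => f (x, w)))
    (hdw : ∀ u : E, Differentiable ℝ (fun y : F => f (u, y)))
    (hMu : ∀ (w : F) (u u' : E),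
      ‖gradient (fun x : E => f (x, w)) u - gradient (fun x : E => f (x, w)) u'‖ ≤ M * ‖u - u'‖)
    (hLw : ∀ (u : E) (w w' : F),
      ‖gradient (fun y : F => f (u, y)) w - gradient (fun y : F => f (u, y)) w'‖ ≤ L * ‖w - w'‖)
    (ustar : E) (wstar : F) (U : Ω → E) (W : Ω → F)
    (hint₁ : Integrable (fun ω => f (U ω, W ω)) μ)
    (hint₂ : Integrable (fun ω => gradient (fun y : F => f (U ω, y)) (W ω)) μ)
    (hint₃ : Integrable (fun ω =>
      ‖gradient (fun y : F => f (U ω, y)) (W ω)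
        - ∫ ω', gradient (fun y : F => f (U ω', y)) (W ω') ∂μ‖ ^ 2) μ)
    (hint₄ : Integrable (fun ω => gradient (fun x : E => f (x, wstar)) (U ω)) μ)
    (hint₅ : Integrable (fun ω =>
      ‖gradient (fun x : E => f (x, wstar)) (U ω)
        - ∫ ω', gradient (fun x : E => f (x, wstar)) (U ω') ∂μ‖ ^ 2) μ)
    (hint₆ : Integrable (fun ω => ‖W ω - wstar‖ ^ 2) μ)
    (hint₇ : Integrable (fun ω => ‖U ω - ustar‖ ^ 2) μ)
    (mw vw mu vu δw δu : ℝ)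
    (hmw : ‖∫ ω, gradient (fun y : F => f (U ω, y)) (W ω) ∂μ‖ ≤ mw)
    (hvw : ∫ ω, ‖gradient (fun y : F => f (U ω, y)) (W ω)
        - ∫ ω', gradient (fun y : F => f (U ω', y)) (W ω') ∂μ‖ ^ 2 ∂μ ≤ vw)
    (hmu : ‖∫ ω, gradient (fun x : E => f (x, wstar)) (U ω) ∂μ‖ ≤ mu)
    (hvu : ∫ ω, ‖gradient (fun x : E => f (x, wstar)) (U ω)
        - ∫ ω', gradient (fun x : E => f (x, wstar)) (U ω') ∂μ‖ ^ 2 ∂μ ≤ vu)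
    (hδw : ∫ ω, ‖W ω - wstar‖ ^ 2 ∂μ ≤ δw ^ 2)
    (hδu : ∫ ω, ‖U ω - ustar‖ ^ 2 ∂μ ≤ δu ^ 2) :
    f (ustar, wstar) - ∫ ω, f (U ω, W ω) ∂μ ≤
      ((L + 1) / 2) * δw ^ 2 + (1 / 2) * mw ^ 2 + (1 / 2) * vw
        + ((M + 1) / 2) * δu ^ 2 + (1 / 2) * mu ^ 2 + (1 / 2) * vu := by
  
  set gw : Ω → F := fun ω => gradient (fun y : F => f (U ω, y)) (W ω) with hgw
  set gu : Ω → E := fun ω => gradient (fun x : E => f (x, wstar)) (U ω) with hgu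
  have hsm_w := second_moment μ gw hint₂ hint₃
  have hsm_u := second_moment μ gu hint₄ hint₅
  have hw2 : ∫ ω, ‖gw ω‖ ^ 2 ∂μ ≤ vw + mw ^ 2 := by
    rw [hsm_w.2]
    have h : ‖∫ ω', gw ω' ∂μ‖ ^ 2 ≤ mw ^ 2 := by
      have := pow_le_pow_left₀ (norm_nonneg _) hmw 2
      simpa using this
    linarith [hvw]
  have hu2 : ∫ ω, ‖gu ω‖ ^ 2 ∂μ ≤ vu + mu ^ 2 := by
    rw [hsm_u.2]
    have h : ‖∫ ω', gu ω' ∂μ‖ ^ 2 ≤ mu ^ 2 := by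
      have := pow_le_pow_left₀ (norm_nonneg _) hmu 2
      simpa using this
    linarith [hvu]
  have hpt : ∀ ω, f (ustar, wstar) - f (U ω, W ω) ≤
      ((1 / 2) * ‖gu ω‖ ^ 2 + ((M + 1) / 2) * ‖U ω - ustar‖ ^ 2)
        + ((1 / 2) * ‖gw ω‖ ^ 2 + ((L + 1) / 2) * ‖W ω - wstar‖ ^ 2) := by
    intro ω
    have d1 : f (ustar, wstar) ≤ f (U ω, wstar)
        + ⟪gu ω, ustar - U ω⟫ + M / 2 * ‖ustar - U ω‖ ^ 2 :=
      descent_lemma (fun x : E => f (x, wstar)) M (hdu wstar) (hMu wstar) (U ω) ustar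
    have d2 : f (U ω, wstar) ≤ f (U ω, W ω)
        + ⟪gw ω, wstar - W ω⟫ + L / 2 * ‖wstar - W ω‖ ^ 2 :=
      descent_lemma (fun y : F => f (U ω, y)) L (hdw (U ω)) (hLw (U ω)) (W ω) wstar
    have i1 : (⟪gu ω, ustar - U ω⟫ : ℝ)
        ≤ (1 / 2) * ‖gu ω‖ ^ 2 + (1 / 2) * ‖ustar - U ω‖ ^ 2 := by
      nlinarith [real_inner_le_norm (gu ω) (ustar - U ω),
        sq_nonneg (‖gu ω‖ - ‖ustar - U ω‖)]
    have i2 : (⟪gw ω, wstar - W ω⟫ : ℝ)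
        ≤ (1 / 2) * ‖gw ω‖ ^ 2 + (1 / 2) * ‖wstar - W ω‖ ^ 2 := by
      nlinarith [real_inner_le_norm (gw ω) (wstar - W ω),
        sq_nonneg (‖gw ω‖ - ‖wstar - W ω‖)]
    have e1 : ‖ustar - U ω‖ ^ 2 = ‖U ω - ustar‖ ^ 2 := by rw [norm_sub_rev]
    have e2 : ‖wstar - W ω‖ ^ 2 = ‖W ω - wstar‖ ^ 2 := by rw [norm_sub_rev]
    rw [e1] at d1 i1
    rw [e2] at d2 i2
    linarith [d1, d2, i1, i2]
  have hBu : Integrable (fun ω =>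
      (1 / 2) * ‖gu ω‖ ^ 2 + ((M + 1) / 2) * ‖U ω - ustar‖ ^ 2) μ :=
    (hsm_u.1.const_mul _).add (hint₇.const_mul _)
  have hBw : Integrable (fun ω =>
      (1 / 2) * ‖gw ω‖ ^ 2 + ((L + 1) / 2) * ‖W ω - wstar‖ ^ 2) μ :=
    (hsm_w.1.const_mul _).add (hint₆.const_mul _)
  have hB := hBu.add hBw
  have hlhs : f (ustar, wstar) - ∫ ω, f (U ω, W ω) ∂μ
      = ∫ ω, (f (ustar, wstar) - f (U ω, W ω)) ∂μ := by
    rw [integral_sub (integrable_const _) hint₁, integral_const]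
    simp
  have hmono : ∫ ω, (f (ustar, wstar) - f (U ω, W ω)) ∂μ
      ≤ ∫ ω, (((1 / 2) * ‖gu ω‖ ^ 2 + ((M + 1) / 2) * ‖U ω - ustar‖ ^ 2)
        + ((1 / 2) * ‖gw ω‖ ^ 2 + ((L + 1) / 2) * ‖W ω - wstar‖ ^ 2)) ∂μ :=
    integral_mono ((integrable_const _).sub hint₁) hB hpt
  have hsplit : ∫ ω, (((1 / 2) * ‖gu ω‖ ^ 2 + ((M + 1) / 2) * ‖U ω - ustar‖ ^ 2)
        + ((1 / 2) * ‖gw ω‖ ^ 2 + ((L + 1) / 2) * ‖W ω - wstar‖ ^ 2)) ∂μ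
      = (1 / 2) * (∫ ω, ‖gu ω‖ ^ 2 ∂μ)
        + ((M + 1) / 2) * (∫ ω, ‖U ω - ustar‖ ^ 2 ∂μ)
        + (1 / 2) * (∫ ω, ‖gw ω‖ ^ 2 ∂μ)
        + ((L + 1) / 2) * (∫ ω, ‖W ω - wstar‖ ^ 2 ∂μ) := by
    rw [integral_add hBu hBw,
      integral_add (hsm_u.1.const_mul _) (hint₇.const_mul _),
      integral_add (hsm_w.1.const_mul _) (hint₆.const_mul _),
      integral_const_mul, integral_const_mul, integral_const_mul, integral_const_mul]
    ring
  rw [hlhs]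
  refine hmono.trans ?_
  rw [hsplit]
  have c1 : ((M + 1) / 2) * (∫ ω, ‖U ω - ustar‖ ^ 2 ∂μ) ≤ ((M + 1) / 2) * δu ^ 2 :=
    mul_le_mul_of_nonneg_left hδu (by linarith)
  have c2 : ((L + 1) / 2) * (∫ ω, ‖W ω - wstar‖ ^ 2 ∂μ) ≤ ((L + 1) / 2) * δw ^ 2 :=
    mul_le_mul_of_nonneg_left hδw (by linarith)
  linarith [hw2, hu2]
end

section
/- Let E be a real Hilbert space and let f : E → ℝ be differentiable with M-Lipschitz gradient, M ≥ 0, and bounded above with sup f − f(u(0)) ≤ B for some B ≥ 0. Let ζ ≥ 1 be a natural number with ζ ≥ M²·α² where α > 0, and define iterates u(i+1) = u(i) + (α/√ζ)·∇f(u(i)). Then min_{i<ζ} ‖∇f(u(i))‖² ≤ 2·B / (α·√ζ). In particular, the minimum squared gradient norm over the first ζ iterates converges to 0 as ζ → ∞ at rate 1/√ζ. -/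
open Real RealInnerProductSpace

/-- Descent lemma: a function with `M`-Lipschitz gradient satisfies the quadratic lower bound
`f (x + v) ≥ f x + ⟪∇f x, v⟫ - (M/2)‖v‖²`. -/
theorem descent_lemma_aux
    {E : Type*} [NormedAddCommGroup E] [InnerProductSpace ℝ E] [CompleteSpace E]
    (f : E → ℝ) (M : ℝ)
    (hf : Differentiable ℝ f)
    (hlip : ∀ x y, ‖gradient f x - gradient f y‖ ≤ M * ‖x - y‖)
    (x v : E) :
    f x + ⟪gradient f x, v⟫ - M / 2 * ‖v‖ ^ 2 ≤ f (x + v) := by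
  set g : ℝ → ℝ := fun t => f (x + t • v) with hg
  have hline : ∀ t : ℝ, HasDerivAt (fun s : ℝ => x + s • v) v t := by
    intro t
    simpa using ((hasDerivAt_id t).smul_const v).const_add x
  have hg' : ∀ t : ℝ, HasDerivAt g (⟪gradient f (x + t • v), v⟫) t := by
    intro t
    have hF := ((hf (x + t • v)).hasGradientAt.hasFDerivAt).comp_hasDerivAt t (hline t)
    simpa [InnerProductSpace.toDual_apply_apply, hg, Function.comp_def] using hF
  set φ : ℝ → ℝ := fun t => g t - t * ⟪gradient f x, v⟫ + M * ‖v‖ ^ 2 / 2 * t ^ 2 with hφ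
  have hφ' : ∀ t : ℝ, HasDerivAt φ
      (⟪gradient f (x + t • v), v⟫ - ⟪gradient f x, v⟫ + M * ‖v‖ ^ 2 * t) t := by
    intro t
    have h1 := ((hg' t).sub ((hasDerivAt_id t).mul_const ⟪gradient f x, v⟫)).add
      (((hasDerivAt_pow 2 t).const_mul (M * ‖v‖ ^ 2 / 2)))
    convert h1 using 1 <;> first | rfl | ring
  have hmono : MonotoneOn φ (Set.Icc (0:ℝ) 1) := by
    apply monotoneOn_of_deriv_nonneg (convex_Icc 0 1)
    · exact (Continuous.continuousOn (by
        exact Continuous.add (Continuous.sub (by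
          exact (hf.continuous.comp (by continuity)) : Continuous g) (by continuity)) (by continuity)))
    · intro t ht
      exact (hφ' t).differentiableAt.differentiableWithinAt
    · intro t ht
      rw [interior_Icc] at ht
      rw [(hφ' t).deriv]
      have hlow : -(M * ‖v‖ ^ 2 * t) ≤ ⟪gradient f (x + t • v), v⟫ - ⟪gradient f x, v⟫ := by
        have := abs_real_inner_le_norm (gradient f (x + t • v) - gradient f x) v
        rw [inner_sub_left] at this
        have h2 : ‖gradient f (x + t • v) - gradient f x‖ ≤ M * (t * ‖v‖) := by
          have := hlip (x + t • v) x
          simpa [norm_smul, abs_of_pos ht.1] using this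
        nlinarith [abs_le.1 this, norm_nonneg v, ht.1.le]
      linarith
  have h01 := hmono (Set.left_mem_Icc.2 zero_le_one) (Set.right_mem_Icc.2 zero_le_one) zero_le_one
  simp only [hφ, hg, zero_smul, one_smul, add_zero] at h01
  nlinarith [h01]

/-- Rate claim of the paper's Theorem 5.4. Let `f : E → ℝ` be differentiable
with `M`-Lipschitz gradient, bounded above with `sup f − f (u 0) ≤ B` (`B ≥ 0`), let `ζ ≥ 1`
with `ζ ≥ M² α²` and `α > 0`, and let `u (i+1) = u i + (α/√ζ) • ∇f (u i)`. Then
`min_{i<ζ} ‖∇f (u i)‖² ≤ 2 B / (α √ζ)`. -/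
theorem gradient_ascent_rate
    {E : Type*} [NormedAddCommGroup E] [InnerProductSpace ℝ E] [CompleteSpace E]
    (f : E → ℝ) (M : ℝ) (hM : 0 ≤ M)
    (hf : Differentiable ℝ f)
    (hlip : ∀ x y, ‖gradient f x - gradient f y‖ ≤ M * ‖x - y‖)
    (hbdd : BddAbove (Set.range f))
    (B : ℝ) (hB : 0 ≤ B)
    (u : ℕ → E)
    (hsup : (⨆ x, f x) - f (u 0) ≤ B)
    (ζ : ℕ) (hζ : 1 ≤ ζ) (α : ℝ) (hα : 0 < α)
    (hζα : M ^ 2 * α ^ 2 ≤ (ζ : ℝ))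
    (hu : ∀ i, u (i + 1) = u i + (α / Real.sqrt ζ) • gradient f (u i)) :
    (Finset.range ζ).inf' (Finset.nonempty_range_iff.mpr (by omega))
        (fun i => ‖gradient f (u i)‖ ^ 2) ≤
      2 * B / (α * Real.sqrt ζ) := by
  have hζpos : (0:ℝ) < ζ := by exact_mod_cast Nat.lt_of_lt_of_le Nat.zero_lt_one hζ
  have hsζ : 0 < Real.sqrt ζ := Real.sqrt_pos.2 hζpos
  set η : ℝ := α / Real.sqrt ζ with hη
  have hηpos : 0 < η := div_pos hα hsζ
  -- M * η ≤ 1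
  have hMη : M * η ≤ 1 := by
    have h1 : M * α ≤ Real.sqrt ζ := by
      have := Real.sqrt_le_sqrt hζα
      rwa [show M ^ 2 * α ^ 2 = (M * α) ^ 2 by ring, Real.sqrt_sq (by positivity)] at this
    rw [hη, ← mul_div_assoc, div_le_one hsζ]
    linarith
  set m : ℝ := (Finset.range ζ).inf' (Finset.nonempty_range_iff.mpr (by omega))
      (fun i => ‖gradient f (u i)‖ ^ 2) with hm
  -- per-step gain
  have hstep : ∀ i ∈ Finset.range ζ, η / 2 * m ≤ f (u (i + 1)) - f (u i) := by
    intro i hi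
    have hmle : m ≤ ‖gradient f (u i)‖ ^ 2 := Finset.inf'_le _ hi
    have hd := descent_lemma_aux f M hf hlip (u i) (η • gradient f (u i))
    rw [← hu i] at hd
    have h1 : ⟪gradient f (u i), η • gradient f (u i)⟫ = η * ‖gradient f (u i)‖ ^ 2 := by
      rw [real_inner_smul_right, real_inner_self_eq_norm_sq]
    have h2 : ‖η • gradient f (u i)‖ ^ 2 = η ^ 2 * ‖gradient f (u i)‖ ^ 2 := by
      rw [norm_smul, Real.norm_eq_abs, abs_of_pos hηpos, mul_pow]
    rw [h1, h2] at hd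
    have hg2 : (0:ℝ) ≤ ‖gradient f (u i)‖ ^ 2 := by positivity
    nlinarith [hd, hMη, hηpos.le]
  -- telescope
  have htel : (ζ : ℝ) * (η / 2 * m) ≤ f (u ζ) - f (u 0) := by
    have := Finset.sum_range_sub (fun i => f (u i)) ζ
    calc (ζ : ℝ) * (η / 2 * m)
        = ∑ _i ∈ Finset.range ζ, η / 2 * m := by
          rw [Finset.sum_const, Finset.card_range, nsmul_eq_mul]
      _ ≤ ∑ i ∈ Finset.range ζ, (f (u (i + 1)) - f (u i)) := Finset.sum_le_sum hstep
      _ = f (u ζ) - f (u 0) := this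
  have hub : f (u ζ) ≤ ⨆ x, f x := le_ciSup hbdd (u ζ)
  have hmain : (ζ : ℝ) * (η / 2 * m) ≤ B := by linarith
  -- rewrite ζ * η = α * sqrt ζ
  have hζη : (ζ : ℝ) * η = α * Real.sqrt ζ := by
    have h := Real.mul_self_sqrt hζpos.le
    rw [hη]
    field_simp
    nlinarith [h]
  rw [← hζη, le_div_iff₀ (by positivity)]
  nlinarith [hmain]
end
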